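/- Let R be a subring of a division ring D, let M be a D-torsion-free left R-module of finite D-dimension, and let L be a nonzero R-submodule of M. Then dim_D(M/L) < dim_D M. Moreover, if dim_D L = 1, then dim_D(M/L) = dim_D M − 1. -/

import Mathlib

open scoped TensorProduct

universe u

/-- The balancing relations defining the tensor product `D ⊗_R M` over the (possibly
noncommutative) ring `R` as a quotient of `D ⊗_ℤ M`. -/
def tensorRel (D : Type u) [DivisionRing D] (R : Subring D)
    (M : Type u) [AddCommGroup M] [Module R M] : Submodule ℤ (D ⊗[ℤ] M) :=
  Submodule.span ℤ
    {x | ∃ (d : D) (r : R) (m : M), x = (d * (r : D)) ⊗ₜ[ℤ] m - d ⊗ₜ[ℤ] (r • m)}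

/-- The tensor product `D ⊗_R M` of the right `R`-module `D` and the left `R`-module `M`,
realized as the quotient of `D ⊗_ℤ M` by the balancing relations. -/
abbrev NCTensor (D : Type u) [DivisionRing D] (R : Subring D)
    (M : Type u) [AddCommGroup M] [Module R M] :=
  (D ⊗[ℤ] M) ⧸ tensorRel D R M

section

variable (D : Type u) [DivisionRing D] (R : Subring D)
variable (M : Type u) [AddCommGroup M] [Module R M]

/-- Left multiplication by `d : D` on `D ⊗_ℤ M`. -/
noncomputable def lmulAux (d : D) : (D ⊗[ℤ] M) →ₗ[ℤ] (D ⊗[ℤ] M) :=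
  TensorProduct.map ((AddMonoidHom.mulLeft d).toIntLinearMap) LinearMap.id

lemma lmulAux_rel (d : D) :
    tensorRel D R M ≤ (tensorRel D R M).comap (lmulAux D M d) := by
  rw [tensorRel, Submodule.span_le]
  rintro x ⟨a, r, m, rfl⟩
  apply Submodule.mem_comap.mpr
  refine Submodule.subset_span ⟨d * a, r, m, ?_⟩
  rw [map_sub, mul_assoc]
  exact congrArg₂ (· - ·) (TensorProduct.map_tmul _ _ _ _) (TensorProduct.map_tmul _ _ _ _)

/-- Left multiplication by `d : D` on `D ⊗_R M`. -/
noncomputable def lmulQ (d : D) : NCTensor D R M →ₗ[ℤ] NCTensor D R M :=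
  Submodule.mapQ _ _ (lmulAux D M d) (lmulAux_rel D R M d)

lemma lmulQ_mk_tmul (d a : D) (m : M) :
    lmulQ D R M d (Submodule.Quotient.mk (a ⊗ₜ[ℤ] m)) =
      Submodule.Quotient.mk ((d * a) ⊗ₜ[ℤ] m) := by
  show Submodule.Quotient.mk (lmulAux D M d (a ⊗ₜ[ℤ] m)) = _
  exact congrArg (Submodule.Quotient.mk (p := tensorRel D R M)) (TensorProduct.map_tmul _ _ a m)

lemma NCTensor.inductionOn {P : NCTensor D R M → Prop} (x : NCTensor D R M)
    (zero : P 0)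
    (tmul : ∀ (a : D) (m : M), P (Submodule.Quotient.mk (a ⊗ₜ[ℤ] m)))
    (add : ∀ x y, P x → P y → P (x + y)) : P x := by
  obtain ⟨y, rfl⟩ := Submodule.Quotient.mk_surjective _ x
  induction y using TensorProduct.induction_on with
  | zero => simpa using zero
  | tmul a m => exact tmul a m
  | add y z hy hz =>
      rw [Submodule.Quotient.mk_add]
      exact add _ _ hy hz

noncomputable instance : SMul D (NCTensor D R M) :=
  ⟨fun d x => lmulQ D R M d x⟩

lemma nct_smul_def (d : D) (x : NCTensor D R M) : d • x = lmulQ D R M d x := rfl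

/-- The left `D`-module structure on `D ⊗_R M`. -/
noncomputable instance : Module D (NCTensor D R M) where
  one_smul x := by
    refine NCTensor.inductionOn D R M (P := fun z => (1 : D) • z = z) x ?_ ?_ ?_
    · simp only [nct_smul_def, map_zero]
    · intro a m
      rw [nct_smul_def, lmulQ_mk_tmul, one_mul]
    · intro x y hx hy
      rw [nct_smul_def, map_add, ← nct_smul_def, ← nct_smul_def, hx, hy]
  mul_smul d e x := by
    refine NCTensor.inductionOn D R M (P := fun z => (d * e) • z = d • e • z) x ?_ ?_ ?_
    · simp only [nct_smul_def, map_zero]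
    · intro a m
      simp only [nct_smul_def, lmulQ_mk_tmul, mul_assoc]
    · intro x y hx hy
      simp only [nct_smul_def, map_add] at hx hy ⊢
      rw [hx, hy]
  smul_zero d := map_zero (lmulQ D R M d)
  smul_add d x y := map_add (lmulQ D R M d) x y
  add_smul d e x := by
    refine NCTensor.inductionOn D R M (P := fun z => (d + e) • z = d • z + e • z) x ?_ ?_ ?_
    · simp only [nct_smul_def, map_zero, add_zero]
    · intro a m
      simp only [nct_smul_def, lmulQ_mk_tmul, add_mul]
      rw [TensorProduct.add_tmul, Submodule.Quotient.mk_add]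
    · intro x y hx hy
      simp only [nct_smul_def, map_add] at hx hy ⊢
      rw [hx, hy]
      abel
  zero_smul x := by
    refine NCTensor.inductionOn D R M (P := fun z => (0 : D) • z = 0) x ?_ ?_ ?_
    · simp only [nct_smul_def, map_zero]
    · intro a m
      rw [nct_smul_def, lmulQ_mk_tmul, zero_mul, TensorProduct.zero_tmul,
        Submodule.Quotient.mk_zero]
    · intro x y hx hy
      rw [nct_smul_def, map_add, ← nct_smul_def, ← nct_smul_def, hx, hy, add_zero]

/-- The canonical map `M → D ⊗_R M`, `m ↦ 1 ⊗ m`. -/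
noncomputable def toNCTensor : M → NCTensor D R M :=
  fun m => Submodule.Quotient.mk ((1 : D) ⊗ₜ[ℤ] m)

/-- A left `R`-module `M` is *`D`-torsion-free* if the canonical map `M → D ⊗_R M`,
`m ↦ 1 ⊗ m`, is injective. -/
def IsDTorsionFree : Prop := Function.Injective (toNCTensor D R M)

end

section Aux

variable (D : Type u) [DivisionRing D] (R : Subring D)
variable (M : Type u) [AddCommGroup M] [Module R M] (L : Submodule R M)

/-- The inclusion `L → M` as a `ℤ`-linear map. -/
noncomputable def auxIncl : (L : Type u) →ₗ[ℤ] M :=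
  (L.subtype).toAddMonoidHom.toIntLinearMap

/-- The quotient map `M → M ⧸ L` as a `ℤ`-linear map. -/
noncomputable def auxMk : M →ₗ[ℤ] (M ⧸ L) :=
  (L.mkQ).toAddMonoidHom.toIntLinearMap

@[simp] lemma auxIncl_apply (x : L) : auxIncl D R M L x = (x : M) := rfl

@[simp] lemma auxMk_apply (m : M) : auxMk D R M L m = Submodule.Quotient.mk m := rfl

/-- `id ⊗ incl : D ⊗ L → D ⊗ M`. -/
noncomputable def auxF : (D ⊗[ℤ] (L : Type u)) →ₗ[ℤ] (D ⊗[ℤ] M) :=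
  LinearMap.lTensor D (auxIncl D R M L)

/-- `id ⊗ mk : D ⊗ M → D ⊗ (M ⧸ L)`. -/
noncomputable def auxG : (D ⊗[ℤ] M) →ₗ[ℤ] (D ⊗[ℤ] (M ⧸ L)) :=
  LinearMap.lTensor D (auxMk D R M L)

lemma auxF_rel : tensorRel D R (L : Type u) ≤ (tensorRel D R M).comap (auxF D R M L) := by
  rw [tensorRel, Submodule.span_le]
  rintro x ⟨d, r, m, rfl⟩
  simp only [SetLike.mem_coe, Submodule.mem_comap, map_sub, auxF, LinearMap.lTensor_tmul,
    auxIncl_apply]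
  refine Submodule.subset_span ⟨d, r, (m : M), ?_⟩
  exact (map_sub _ _ _).trans
    (congrArg₂ (· - ·) (LinearMap.lTensor_tmul ..) (LinearMap.lTensor_tmul ..))

lemma auxG_rel : tensorRel D R M ≤ (tensorRel D R (M ⧸ L)).comap (auxG D R M L) := by
  rw [tensorRel, Submodule.span_le]
  rintro x ⟨d, r, m, rfl⟩
  simp only [SetLike.mem_coe, Submodule.mem_comap, map_sub, auxG, LinearMap.lTensor_tmul,
    auxMk_apply]
  refine Submodule.subset_span ⟨d, r, Submodule.Quotient.mk m, ?_⟩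
  exact (map_sub _ _ _).trans
    (congrArg₂ (· - ·) (LinearMap.lTensor_tmul ..) (LinearMap.lTensor_tmul ..))

/-- The induced map `D ⊗_R L → D ⊗_R M`. -/
noncomputable def auxι : NCTensor D R (L : Type u) →ₗ[ℤ] NCTensor D R M :=
  Submodule.mapQ _ _ (auxF D R M L) (auxF_rel D R M L)

/-- The induced map `D ⊗_R M → D ⊗_R (M ⧸ L)`. -/
noncomputable def auxπ : NCTensor D R M →ₗ[ℤ] NCTensor D R (M ⧸ L) :=
  Submodule.mapQ _ _ (auxG D R M L) (auxG_rel D R M L)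

lemma auxι_mk_tmul (a : D) (x : L) :
    auxι D R M L (Submodule.Quotient.mk (a ⊗ₜ[ℤ] x)) =
      Submodule.Quotient.mk (a ⊗ₜ[ℤ] (x : M)) := by
  show Submodule.Quotient.mk (auxF D R M L (a ⊗ₜ[ℤ] x)) = _
  exact congrArg (Submodule.Quotient.mk (p := tensorRel D R M)) (LinearMap.lTensor_tmul ..)

lemma auxπ_mk_tmul (a : D) (m : M) :
    auxπ D R M L (Submodule.Quotient.mk (a ⊗ₜ[ℤ] m)) =
      Submodule.Quotient.mk (a ⊗ₜ[ℤ] (Submodule.Quotient.mk m : M ⧸ L)) := by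
  show Submodule.Quotient.mk (auxG D R M L (a ⊗ₜ[ℤ] m)) = _
  exact congrArg (Submodule.Quotient.mk (p := tensorRel D R (M ⧸ L))) (LinearMap.lTensor_tmul ..)

/-- The induced map `D ⊗_R L → D ⊗_R M` as a `D`-linear map. -/
noncomputable def auxιD : NCTensor D R (L : Type u) →ₗ[D] NCTensor D R M where
  toFun := auxι D R M L
  map_add' := map_add _
  map_smul' d x := by
    refine NCTensor.inductionOn D R (L : Type u)
      (P := fun z => auxι D R M L (d • z) = d • auxι D R M L z) x ?_ ?_ ?_
    · simp only [smul_zero, map_zero]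
    · intro a m
      rw [nct_smul_def, lmulQ_mk_tmul, auxι_mk_tmul, auxι_mk_tmul, nct_smul_def, lmulQ_mk_tmul]
    · intro x y hx hy
      rw [smul_add, map_add, hx, hy, map_add, ← smul_add]

/-- The induced map `D ⊗_R M → D ⊗_R (M ⧸ L)` as a `D`-linear map. -/
noncomputable def auxπD : NCTensor D R M →ₗ[D] NCTensor D R (M ⧸ L) where
  toFun := auxπ D R M L
  map_add' := map_add _
  map_smul' d x := by
    refine NCTensor.inductionOn D R M
      (P := fun z => auxπ D R M L (d • z) = d • auxπ D R M L z) x ?_ ?_ ?_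
    · simp only [smul_zero, map_zero]
    · intro a m
      rw [nct_smul_def, lmulQ_mk_tmul, auxπ_mk_tmul, auxπ_mk_tmul, nct_smul_def, lmulQ_mk_tmul]
    · intro x y hx hy
      rw [smul_add, map_add, hx, hy, map_add, ← smul_add]

lemma auxExact : Function.Exact (auxIncl D R M L) (auxMk D R M L) := by
  intro m
  simp only [auxMk_apply, Submodule.Quotient.mk_eq_zero, Set.mem_range]
  constructor
  · intro h; exact ⟨⟨m, h⟩, rfl⟩
  · rintro ⟨⟨x, hx⟩, rfl⟩; exact hx

lemma auxMk_surj : Function.Surjective (auxMk D R M L) := fun y =>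
  (Submodule.Quotient.mk_surjective L y).imp fun _ h => h

lemma auxTexact : Function.Exact (auxF D R M L) (auxG D R M L) :=
  lTensor_exact D (auxExact D R M L) (auxMk_surj D R M L)

lemma auxComap :
    (tensorRel D R (M ⧸ L)).comap (auxG D R M L) =
      tensorRel D R M ⊔ LinearMap.range (auxF D R M L) := by
  have hkerG : LinearMap.ker (auxG D R M L) = LinearMap.range (auxF D R M L) :=
    LinearMap.exact_iff.mp (auxTexact D R M L)
  apply le_antisymm
  · intro x hx
    rw [Submodule.mem_comap] at hx
    have hmap : tensorRel D R (M ⧸ L) ≤ (tensorRel D R M).map (auxG D R M L) := by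
      rw [tensorRel, Submodule.span_le]
      rintro y ⟨d, r, mq, rfl⟩
      obtain ⟨m, rfl⟩ := Submodule.Quotient.mk_surjective L mq
      refine ⟨(d * (r : D)) ⊗ₜ[ℤ] m - d ⊗ₜ[ℤ] (r • m),
        Submodule.subset_span ⟨d, r, m, rfl⟩, ?_⟩
      simp only [map_sub, auxG, LinearMap.lTensor_tmul, auxMk_apply,
        Submodule.Quotient.mk_smul]
      exact (map_sub _ _ _).trans
        (congrArg₂ (· - ·) (LinearMap.lTensor_tmul ..) (LinearMap.lTensor_tmul ..))
    obtain ⟨y, hy, hyx⟩ := hmap hx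
    have hsub : x - y ∈ LinearMap.range (auxF D R M L) := by
      rw [← hkerG, LinearMap.mem_ker, map_sub, hyx, sub_self]
    exact Submodule.mem_sup.mpr ⟨y, hy, x - y, hsub, by abel⟩
  · rw [sup_le_iff]
    refine ⟨auxG_rel D R M L, ?_⟩
    intro x hx
    rw [Submodule.mem_comap]
    have : auxG D R M L x = 0 := by rw [← LinearMap.mem_ker, hkerG]; exact hx
    rw [this]
    exact zero_mem _

lemma auxKer : LinearMap.ker (auxπ D R M L) = LinearMap.range (auxι D R M L) := by
  rw [auxπ, Submodule.mapQ, Submodule.ker_liftQ, LinearMap.ker_comp, Submodule.ker_mkQ,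
    auxComap, Submodule.map_sup, Submodule.mkQ_map_self, bot_sup_eq, ← LinearMap.range_comp,
    ← Submodule.mapQ_mkQ (tensorRel D R (L : Type u)) (tensorRel D R M) (auxF D R M L)
      (h := auxF_rel D R M L),
    LinearMap.range_comp, Submodule.range_mkQ, Submodule.map_top]
  rfl

lemma auxKerD : LinearMap.ker (auxπD D R M L) = LinearMap.range (auxιD D R M L) := by
  ext x
  constructor
  · intro hx
    have h0 : x ∈ LinearMap.ker (auxπ D R M L) := hx
    rw [auxKer] at h0
    obtain ⟨y, hy⟩ := h0
    exact ⟨y, hy⟩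
  · rintro ⟨y, rfl⟩
    have h0 : auxι D R M L y ∈ LinearMap.range (auxι D R M L) := ⟨y, rfl⟩
    rw [← auxKer] at h0
    exact h0

lemma auxπD_surj : Function.Surjective (auxπD D R M L) := by
  intro x
  refine NCTensor.inductionOn D R (M ⧸ L)
    (P := fun z => ∃ y, auxπD D R M L y = z) x ⟨0, map_zero _⟩ ?_ ?_
  · intro a mq
    obtain ⟨m, rfl⟩ := Submodule.Quotient.mk_surjective L mq
    exact ⟨Submodule.Quotient.mk (a ⊗ₜ[ℤ] m), auxπ_mk_tmul D R M L a m⟩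
  · rintro x y ⟨u, rfl⟩ ⟨v, rfl⟩
    exact ⟨u + v, map_add _ _ _⟩

end Aux

/-- **Lemma (dimension drop for quotients of `D`-torsion-free modules).** Let `R` be a subring
of a division ring `D`, let `M` be a `D`-torsion-free left `R`-module of finite `D`-dimension,
and let `L` be a nonzero `R`-submodule of `M`.  Then `dim_D (M/L) < dim_D M`; moreover, if
`dim_D L = 1`, then `dim_D (M/L) = dim_D M − 1`. -/
theorem rank_quotient_lt_of_isDTorsionFree (D : Type u) [DivisionRing D] (R : Subring D)
    (M : Type u) [AddCommGroup M] [Module R M]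
    (htf : IsDTorsionFree D R M)
    (hfin : Module.rank D (NCTensor D R M) < Cardinal.aleph0)
    (L : Submodule R M) (hL : L ≠ ⊥) :
    Module.rank D (NCTensor D R (M ⧸ L)) < Module.rank D (NCTensor D R M) ∧
    (Module.rank D (NCTensor D R L) = 1 →
      Module.rank D (NCTensor D R (M ⧸ L)) + 1 = Module.rank D (NCTensor D R M)) := by
  obtain ⟨x, hxL, hx0⟩ := (Submodule.ne_bot_iff L).mp hL
  -- rank-nullity for the surjection `πD : D ⊗_R M → D ⊗_R (M ⧸ L)`
  have hrnk := LinearMap.rank_range_add_rank_ker (auxπD D R M L)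
  rw [LinearMap.range_eq_top.mpr (auxπD_surj D R M L), rank_top] at hrnk
  -- the kernel contains the nonzero element `1 ⊗ x`
  have hmem : toNCTensor D R M x ∈ LinearMap.ker (auxπD D R M L) := by
    have h1 : auxπD D R M L (toNCTensor D R M x) =
        Submodule.Quotient.mk ((1 : D) ⊗ₜ[ℤ] (Submodule.Quotient.mk x : M ⧸ L)) :=
      auxπ_mk_tmul D R M L 1 x
    have h2 : (Submodule.Quotient.mk x : M ⧸ L) = 0 :=
      (Submodule.Quotient.mk_eq_zero L).mpr hxL
    rw [LinearMap.mem_ker, h1, h2, TensorProduct.tmul_zero, Submodule.Quotient.mk_zero]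
  have hne : toNCTensor D R M x ≠ 0 := by
    intro h
    have h0 : toNCTensor D R M 0 = 0 := by
      rw [toNCTensor, TensorProduct.tmul_zero, Submodule.Quotient.mk_zero]
    exact hx0 (htf (h.trans h0.symm))
  have hkpos : 0 < Module.rank D (LinearMap.ker (auxπD D R M L)) := by
    rw [rank_pos_iff_exists_ne_zero]
    refine ⟨⟨toNCTensor D R M x, hmem⟩, ?_⟩
    intro h
    exact hne (congrArg Subtype.val h)
  have hk1 : 1 ≤ Module.rank D (LinearMap.ker (auxπD D R M L)) :=
    Cardinal.one_le_iff_pos.mpr hkpos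
  have hle : Module.rank D (NCTensor D R (M ⧸ L)) + 1 ≤ Module.rank D (NCTensor D R M) := by
    calc Module.rank D (NCTensor D R (M ⧸ L)) + 1
        ≤ Module.rank D (NCTensor D R (M ⧸ L)) +
            Module.rank D (LinearMap.ker (auxπD D R M L)) := add_le_add le_rfl hk1
      _ = Module.rank D (NCTensor D R M) := hrnk
  have ha : Module.rank D (NCTensor D R (M ⧸ L)) < Cardinal.aleph0 :=
    lt_of_le_of_lt (le_trans le_self_add (le_of_eq hrnk)) hfin
  obtain ⟨na, hna⟩ := Cardinal.lt_aleph0.mp ha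
  constructor
  · calc Module.rank D (NCTensor D R (M ⧸ L))
        < Module.rank D (NCTensor D R (M ⧸ L)) + 1 := by
          rw [hna]; exact_mod_cast Nat.lt_succ_self na
      _ ≤ Module.rank D (NCTensor D R M) := hle
  · intro hL1
    have hkle : Module.rank D (LinearMap.ker (auxπD D R M L)) ≤ 1 := by
      rw [auxKerD]
      calc Module.rank D (LinearMap.range (auxιD D R M L))
          ≤ Module.rank D (NCTensor D R (L : Type u)) := rank_range_le _
        _ = 1 := hL1
    have hkeq : Module.rank D (LinearMap.ker (auxπD D R M L)) = 1 :=
      le_antisymm hkle hk1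
    rw [← hkeq]
    exact hrnk
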